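/- Let γ ≠ 0, δ > 0 and M(0) > 0 with γ > -δ M(0). If M : [0,T) → ℝ is differentiable, positive, and satisfies M'(t) ≥ 2δ e^{2γt} M(t)² on [0,T), then T ≤ (1/(2γ)) log(1 + γ/(δ M(0))). -/

import Mathlib

theorem stmt1 (γ δ T : ℝ) (hδ : 0 < δ) (hγ : γ ≠ 0) (hT : 0 < T)
    (M M' : ℝ → ℝ)
    (hM : ∀ t ∈ Set.Ico (0:ℝ) T, HasDerivAt M (M' t) t)
    (hpos : ∀ t ∈ Set.Ico (0:ℝ) T, 0 < M t)
    (hM0 : 0 < M 0)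
    (hγM : γ > -δ * M 0)
    (hineq : ∀ t ∈ Set.Ico (0:ℝ) T, 2 * δ * Real.exp (2*γ*t) * (M t)^2 ≤ M' t) :
    T ≤ (1/(2*γ)) * Real.log (1 + γ / (δ * M 0)) := by
  have hδM : 0 < δ * M 0 := mul_pos hδ hM0
  have hM0' : (M 0) ≠ 0 := ne_of_gt hM0
  set A : ℝ := 1 + γ / (δ * M 0) with hA
  have hAeq : A = (δ * M 0 + γ) / (δ * M 0) := by
    rw [hA]; field_simp
  have hApos : 0 < A := by
    rw [hAeq]; exact div_pos (by linarith) hδM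
  set F : ℝ → ℝ := fun s => (M s)⁻¹ + δ/γ * Real.exp (2*γ*s) with hF
  have hFderiv : ∀ x ∈ Set.Ico (0:ℝ) T,
      HasDerivAt F (-(M' x)/(M x)^2 + δ/γ * (Real.exp (2*γ*x) * (2*γ))) x := by
    intro x hx
    have h1 : HasDerivAt (fun s => (M s)⁻¹) (-(M' x)/(M x)^2) x := by
      exact (hM x hx).inv (ne_of_gt (hpos x hx))
    have h2 : HasDerivAt (fun s => Real.exp (2*γ*s)) (Real.exp (2*γ*x) * (2*γ)) x := by
      have := ((hasDerivAt_id x).const_mul (2*γ)).exp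
      simpa using this
    exact h1.add (h2.const_mul (δ/γ))
  have key : ∀ t ∈ Set.Ico (0:ℝ) T, δ/γ * Real.exp (2*γ*t) < 1/(M 0) + δ/γ := by
    intro t ht
    have hsub : Set.Icc (0:ℝ) t ⊆ Set.Ico 0 T := fun x hx =>
      ⟨hx.1, lt_of_le_of_lt hx.2 ht.2⟩
    have hanti : AntitoneOn F (Set.Icc 0 t) := by
      apply antitoneOn_of_deriv_nonpos (convex_Icc 0 t)
      · intro x hx
        exact ((hFderiv x (hsub hx)).continuousAt).continuousWithinAt
      · intro x hx
        rw [interior_Icc] at hx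
        exact ((hFderiv x (hsub (Set.Ioo_subset_Icc_self hx))).differentiableAt).differentiableWithinAt
      · intro x hx
        rw [interior_Icc] at hx
        have hx' : x ∈ Set.Ico (0:ℝ) T := hsub (Set.Ioo_subset_Icc_self hx)
        rw [(hFderiv x hx').deriv]
        have he : δ/γ * (Real.exp (2*γ*x) * (2*γ)) = 2*δ*Real.exp (2*γ*x) := by
          field_simp
        rw [he]
        have hM2 : 0 < (M x)^2 := pow_pos (hpos x hx') 2
        have hi := hineq x hx'
        rw [neg_div]
        have h3 : 2*δ*Real.exp (2*γ*x) ≤ M' x / (M x)^2 :=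
          (le_div_iff₀ hM2).mpr (by linarith)
        linarith
    have hFt : F t ≤ F 0 := hanti ⟨le_refl 0, ht.1⟩ ⟨ht.1, le_refl t⟩ ht.1
    have hMt : 0 < (M t)⁻¹ := inv_pos.mpr (hpos t ht)
    have hF0 : F 0 = 1/(M 0) + δ/γ := by simp [hF, one_div]
    rw [hF0] at hFt
    have hlt : δ/γ * Real.exp (2*γ*t) < F t := by
      simp only [hF]; linarith
    linarith
  by_contra hcon
  push_neg at hcon
  set t := max 0 ((1/(2*γ)) * Real.log A) with htdef
  have ht : t ∈ Set.Ico (0:ℝ) T := ⟨le_max_left _ _, max_lt hT hcon⟩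
  have hkey := key t ht
  have htA : (1/(2*γ)) * Real.log A ≤ t := le_max_right _ _
  have hfin : δ/γ * A = 1/(M 0) + δ/γ := by
    rw [hA]; field_simp; ring
  rcases lt_or_gt_of_ne hγ with hγneg | hγpos
  · have h2γ : 2*γ < 0 := by linarith
    have hlog : 2*γ*t ≤ Real.log A := by
      have h := mul_le_mul_of_nonpos_left htA (le_of_lt h2γ)
      calc 2*γ*t ≤ 2*γ*((1/(2*γ)) * Real.log A) := h
        _ = Real.log A := by field_simp
    have hexp : Real.exp (2*γ*t) ≤ A := by
      calc Real.exp (2*γ*t) ≤ Real.exp (Real.log A) := Real.exp_le_exp.mpr hlog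
        _ = A := Real.exp_log hApos
    have hδγ : δ/γ < 0 := div_neg_of_pos_of_neg hδ hγneg
    have hmul : δ/γ * A ≤ δ/γ * Real.exp (2*γ*t) :=
      mul_le_mul_of_nonpos_left hexp (le_of_lt hδγ)
    rw [hfin] at hmul
    linarith
  · have h2γ : 0 < 2*γ := by linarith
    have hlog : Real.log A ≤ 2*γ*t := by
      have h := mul_le_mul_of_nonneg_left htA (le_of_lt h2γ)
      calc Real.log A = 2*γ*((1/(2*γ)) * Real.log A) := by field_simp
        _ ≤ 2*γ*t := h
    have hexp : A ≤ Real.exp (2*γ*t) := by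
      calc A = Real.exp (Real.log A) := (Real.exp_log hApos).symm
        _ ≤ Real.exp (2*γ*t) := Real.exp_le_exp.mpr hlog
    have hδγ : 0 < δ/γ := div_pos hδ hγpos
    have hmul : δ/γ * A ≤ δ/γ * Real.exp (2*γ*t) :=
      mul_le_mul_of_nonneg_left hexp (le_of_lt hδγ)
    rw [hfin] at hmul
    linarith
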